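/- arXiv:2011.12272 — 2 statements merged into one kernel-verified Lean document; each statement's English description precedes it below -/
import Mathlib

section
/- Let M and N be positive integers with M ≥ N+1. Let σ > 0 and σ₁,…,σ_M > 0, set W_ρ = diag(1/σ₁²,…,1/σ_M²) and W_τ = (1/σ²)·I_M. Let G₀, G₁, G₂ be real M×(N+1) matrices with G₂ᵀG₂ invertible. Define F_OWLAS = G₀ᵀ W_ρ G₀ and the block matrix F_Mode2 = [[G₀ᵀW_ρG₀ + G₁ᵀW_τG₁, G₁ᵀW_τG₂],[G₂ᵀW_τG₁, G₂ᵀW_τG₂]]. Assume F_OWLAS and F_Mode2 are positive definite. Then for every index i with 1 ≤ i ≤ N+1, the diagonal entries of the inverses satisfy [F_Mode2⁻¹]_{i,i} ≤ [F_OWLAS⁻¹]_{i,i} (Theorem 2: the localization and synchronization accuracy of TWLAS Mode 2 is higher than or equal to that of the conventional one-way TOA method OWLAS). -/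
open Matrix

/-- Variational characterization lower bound: for a positive definite `F`,
`2⟨x,w⟩ - ⟨w, F w⟩ ≤ ⟨x, F⁻¹ x⟩` for all `w`. -/
lemma var_lower_bound {m : Type*} [Fintype m] [DecidableEq m]
    (F : Matrix m m ℝ) (hF : F.PosDef) (x w : m → ℝ) :
    2 * (x ⬝ᵥ w) - w ⬝ᵥ (F *ᵥ w) ≤ x ⬝ᵥ (F⁻¹ *ᵥ x) := by
  have hdet : IsUnit F.det := isUnit_iff_ne_zero.mpr hF.det_pos.ne'
  set z : m → ℝ := F⁻¹ *ᵥ x with hz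
  have hFz : F *ᵥ z = x := by
    rw [hz, mulVec_mulVec, Matrix.mul_nonsing_inv F hdet, one_mulVec]
  have hsym : Fᵀ = F := by
    have := hF.isHermitian
    ext a b
    simpa using congrFun (congrFun this a) b
  have h0 : 0 ≤ (w - z) ⬝ᵥ (F *ᵥ (w - z)) := by
    simpa only [star_trivial] using hF.posSemidef.dotProduct_mulVec_nonneg (w - z)
  have hzFw : z ⬝ᵥ (F *ᵥ w) = x ⬝ᵥ w := by
    rw [dotProduct_mulVec]
    have : z ᵥ* F = x := by rw [← hsym, vecMul_transpose, hFz]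
    rw [this]
  have hexp : (w - z) ⬝ᵥ (F *ᵥ (w - z))
      = w ⬝ᵥ (F *ᵥ w) - 2 * (x ⬝ᵥ w) + z ⬝ᵥ x := by
    rw [mulVec_sub, dotProduct_sub, sub_dotProduct, sub_dotProduct,
      hFz, hzFw, dotProduct_comm w x]
    ring
  rw [hexp] at h0
  have hcomm : z ⬝ᵥ x = x ⬝ᵥ z := dotProduct_comm _ _
  linarith

lemma sandwich {l m : Type*} [Fintype l] [Fintype m]
    (A B : Matrix l m ℝ) (W : Matrix l l ℝ) (x y : m → ℝ) :
    x ⬝ᵥ ((Aᵀ * W * B) *ᵥ y) = (A *ᵥ x) ⬝ᵥ (W *ᵥ (B *ᵥ y)) := by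
  rw [← mulVec_mulVec, ← mulVec_mulVec, dotProduct_mulVec x Aᵀ, vecMul_transpose]

/-- Theorem 2 of the paper: the localization and synchronization accuracy of
TWLAS Mode 2 is higher than or equal to that of the conventional one-way TOA
method (OWLAS): `[F_Mode2⁻¹]_{i,i} ≤ [F_OWLAS⁻¹]_{i,i}` for `i = 1, …, N+1`. -/
theorem twlas_mode2_better_than_owlas
    (M N : ℕ) (hM : 0 < M) (hN : 0 < N) (hMN : N + 1 ≤ M)
    (σ : ℝ) (hσ : 0 < σ) (σa : Fin M → ℝ) (hσa : ∀ i, 0 < σa i)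
    (Wρ : Matrix (Fin M) (Fin M) ℝ)
    (hWρ : Wρ = Matrix.diagonal fun i => 1 / (σa i) ^ 2)
    (Wτ : Matrix (Fin M) (Fin M) ℝ)
    (hWτ : Wτ = (1 / σ ^ 2) • (1 : Matrix (Fin M) (Fin M) ℝ))
    (G₀ G₁ G₂ : Matrix (Fin M) (Fin (N + 1)) ℝ)
    (hG₂ : IsUnit (G₂ᵀ * G₂).det)
    (FOWLAS : Matrix (Fin (N + 1)) (Fin (N + 1)) ℝ)
    (hFOWLAS : FOWLAS = G₀ᵀ * Wρ * G₀)
    (FMode2 : Matrix (Fin (N + 1) ⊕ Fin (N + 1)) (Fin (N + 1) ⊕ Fin (N + 1)) ℝ)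
    (hFMode2 : FMode2 = Matrix.fromBlocks
      (G₀ᵀ * Wρ * G₀ + G₁ᵀ * Wτ * G₁) (G₁ᵀ * Wτ * G₂) (G₂ᵀ * Wτ * G₁) (G₂ᵀ * Wτ * G₂))
    (hFOWLASpd : FOWLAS.PosDef) (hFMode2pd : FMode2.PosDef) :
    ∀ i : Fin (N + 1),
      FMode2⁻¹ (Sum.inl i) (Sum.inl i) ≤ FOWLAS⁻¹ i i := by
  intro i
  set u : (Fin (N + 1) ⊕ Fin (N + 1)) → ℝ := Pi.single (Sum.inl i) 1 with hu
  set z : (Fin (N + 1) ⊕ Fin (N + 1)) → ℝ := FMode2⁻¹ *ᵥ u with hzdef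
  set z₁ : Fin (N + 1) → ℝ := fun j => z (Sum.inl j) with hz1
  set z₂ : Fin (N + 1) → ℝ := fun j => z (Sum.inr j) with hz2
  have hdet : IsUnit FMode2.det := isUnit_iff_ne_zero.mpr hFMode2pd.det_pos.ne'
  have hFz : FMode2 *ᵥ z = u := by
    rw [hzdef, mulVec_mulVec, Matrix.mul_nonsing_inv FMode2 hdet, one_mulVec]
  -- diagonal entry as a quadratic form
  have h1 : FMode2⁻¹ (Sum.inl i) (Sum.inl i) = u ⬝ᵥ z := by
    simp [hu, hzdef, single_dotProduct, mulVec_single]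
  have huz : u ⬝ᵥ z = z (Sum.inl i) := by
    simp [hu, single_dotProduct]
  have hzFz : z ⬝ᵥ (FMode2 *ᵥ z) = u ⬝ᵥ z := by
    rw [hFz, dotProduct_comm]
  -- decompose z
  have hzelim : z = Sum.elim z₁ z₂ := by
    funext j; cases j <;> rfl
  -- the scheduling weight matrix is PSD
  have hWτpsd : ∀ q : Fin M → ℝ, 0 ≤ q ⬝ᵥ (Wτ *ᵥ q) := by
    intro q
    rw [hWτ]
    simp only [smul_mulVec, one_mulVec, dotProduct_smul, smul_eq_mul]
    have hqq : (0:ℝ) ≤ q ⬝ᵥ q := Finset.sum_nonneg fun j _ => mul_self_nonneg (q j)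
    positivity
  have hsplit : z ⬝ᵥ (FMode2 *ᵥ z)
      = z₁ ⬝ᵥ (FOWLAS *ᵥ z₁)
        + (G₁ *ᵥ z₁ + G₂ *ᵥ z₂) ⬝ᵥ (Wτ *ᵥ (G₁ *ᵥ z₁ + G₂ *ᵥ z₂)) := by
    rw [hFMode2, hzelim, fromBlocks_mulVec, sumElim_dotProduct_sumElim]
    simp only [Sum.elim_comp_inl, Sum.elim_comp_inr]
    rw [add_mulVec, dotProduct_add, dotProduct_add, dotProduct_add]
    rw [sandwich G₁ G₁ Wτ z₁ z₁, sandwich G₁ G₂ Wτ z₁ z₂,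
      sandwich G₂ G₁ Wτ z₂ z₁, sandwich G₂ G₂ Wτ z₂ z₂]
    rw [mulVec_add, dotProduct_add, add_dotProduct, add_dotProduct, hFOWLAS]
    ring
  have hkey := var_lower_bound FOWLAS hFOWLASpd (Pi.single i 1) z₁
  have hx1 : (Pi.single i 1 : Fin (N+1) → ℝ) ⬝ᵥ z₁ = z (Sum.inl i) := by
    simp [single_dotProduct, hz1]
  have hx2 : (Pi.single i 1 : Fin (N+1) → ℝ) ⬝ᵥ (FOWLAS⁻¹ *ᵥ Pi.single i 1)
      = FOWLAS⁻¹ i i := by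
    simp [single_dotProduct, mulVec_single]
  have hfinal : FMode2⁻¹ (Sum.inl i) (Sum.inl i)
      = 2 * ((Pi.single i 1 : Fin (N+1) → ℝ) ⬝ᵥ z₁) - z ⬝ᵥ (FMode2 *ᵥ z) := by
    rw [h1, hzFz, hx1, huz]; ring
  have hnn := hWτpsd (G₁ *ᵥ z₁ + G₂ *ᵥ z₂)
  rw [hfinal, hsplit]
  rw [hx1, hx2] at hkey
  linarith
end

section
/- Let M and N be positive integers, let σ > 0, W_τ = (1/σ²)·I_M, and let W_ρ be an M×M symmetric positive definite matrix. Let G₀, G₁ be real M×(N+1) matrices, let P be an invertible real (N+1)×(N+1) matrix and δt ≠ 0 a real number, and set G₂ = δt·G₁·P. Assume G₁ᵀG₁ is invertible, F_OWLAS = G₀ᵀW_ρG₀ is positive definite, and the block matrix F_Mode2 = [[G₀ᵀW_ρG₀ + G₁ᵀW_τG₁, G₁ᵀW_τG₂],[G₂ᵀW_τG₁, G₂ᵀW_τG₂]] is positive definite. Then the top-left (N+1)×(N+1) block of F_Mode2⁻¹ equals F_OWLAS⁻¹. (In the simultaneous-response case, TWLAS Mode 2 and the one-way TOA method OWLAS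 have identical estimation performance.) -/
open Matrix

/-- In the simultaneous-response case (`G₂ = δt·G₁·P`), TWLAS Mode 2 and the
one-way TOA method OWLAS have identical estimation performance: the top-left
`(N+1)×(N+1)` block of `F_Mode2⁻¹` equals `F_OWLAS⁻¹`. -/
theorem mode2_equals_owlas_simultaneous
    (M N : ℕ) (hM : 0 < M) (hN : 0 < N)
    (σ : ℝ) (hσ : 0 < σ)
    (Wτ : Matrix (Fin M) (Fin M) ℝ)
    (hWτ : Wτ = (1 / σ ^ 2) • (1 : Matrix (Fin M) (Fin M) ℝ))
    (Wρ : Matrix (Fin M) (Fin M) ℝ) (hWρ : Wρ.PosDef)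
    (G₀ G₁ : Matrix (Fin M) (Fin (N + 1)) ℝ)
    (P : Matrix (Fin (N + 1)) (Fin (N + 1)) ℝ) (hP : IsUnit P.det)
    (δt : ℝ) (hδt : δt ≠ 0)
    (G₂ : Matrix (Fin M) (Fin (N + 1)) ℝ) (hG₂ : G₂ = δt • (G₁ * P))
    (hG₁ : IsUnit (G₁ᵀ * G₁).det)
    (FOWLAS : Matrix (Fin (N + 1)) (Fin (N + 1)) ℝ)
    (hFOWLAS : FOWLAS = G₀ᵀ * Wρ * G₀)
    (hFOWLASpd : FOWLAS.PosDef)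
    (FMode2 : Matrix (Fin (N + 1) ⊕ Fin (N + 1)) (Fin (N + 1) ⊕ Fin (N + 1)) ℝ)
    (hFMode2 : FMode2 = Matrix.fromBlocks
      (G₀ᵀ * Wρ * G₀ + G₁ᵀ * Wτ * G₁) (G₁ᵀ * Wτ * G₂) (G₂ᵀ * Wτ * G₁) (G₂ᵀ * Wτ * G₂))
    (hFMode2pd : FMode2.PosDef) :
    (FMode2⁻¹).toBlocks₁₁ = FOWLAS⁻¹ := by
  -- abbreviations
  set Q : Matrix (Fin (N + 1)) (Fin (N + 1)) ℝ := δt • P with hQ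
  set B₀ : Matrix (Fin (N + 1)) (Fin (N + 1)) ℝ := G₁ᵀ * Wτ * G₁ with hB₀
  have hB₀' : B₀ = (1 / σ ^ 2) • (G₁ᵀ * G₁) := by
    rw [hB₀, hWτ, Matrix.mul_smul, Matrix.mul_one, Matrix.smul_mul]
  have hσ2 : (1 / σ ^ 2 : ℝ) ≠ 0 := by positivity
  have hQdet : IsUnit Q.det := by
    rw [hQ, Matrix.det_smul]
    exact (IsUnit.pow _ hδt.isUnit).mul hP
  have hQTdet : IsUnit Qᵀ.det := by rwa [Matrix.det_transpose]
  have hB₀det : IsUnit B₀.det := by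
    rw [hB₀', Matrix.det_smul]
    exact (IsUnit.pow _ hσ2.isUnit).mul hG₁
  -- rewrite FMode2 in terms of B₀ and Q
  have hFM : FMode2 = Matrix.fromBlocks (FOWLAS + B₀) (B₀ * Q) (Qᵀ * B₀) (Qᵀ * B₀ * Q) := by
    rw [hFMode2, hFOWLAS, hB₀', hWτ, hG₂, hQ]
    congr 1 <;>
      simp [Matrix.mul_smul, Matrix.smul_mul, Matrix.transpose_smul, Matrix.mul_assoc,
        smul_smul] <;> ring_nf
  have hFdet : IsUnit FOWLAS.det := hFOWLASpd.det_pos.ne'.isUnit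
  -- Schur complement computation
  have hDdet : IsUnit (Qᵀ * B₀ * Q).det := by
    rw [Matrix.det_mul, Matrix.det_mul]
    exact (hQTdet.mul hB₀det).mul hQdet
  letI iD : Invertible (Qᵀ * B₀ * Q) := (Qᵀ * B₀ * Q).invertibleOfIsUnitDet hDdet
  have hSchur : (FOWLAS + B₀) - (B₀ * Q) * ⅟(Qᵀ * B₀ * Q) * (Qᵀ * B₀) = FOWLAS := by
    rw [invOf_eq_nonsing_inv, Matrix.mul_inv_rev, Matrix.mul_inv_rev]
    simp only [Matrix.mul_assoc]
    rw [Matrix.mul_nonsing_inv_cancel_left _ _ hQdet,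
      Matrix.nonsing_inv_mul_cancel_left _ _ hQTdet,
      Matrix.mul_nonsing_inv_cancel_left _ _ hB₀det, add_sub_cancel_right]
  letI iS : Invertible ((FOWLAS + B₀) - (B₀ * Q) * ⅟(Qᵀ * B₀ * Q) * (Qᵀ * B₀)) :=
    hSchur.symm ▸ FOWLAS.invertibleOfIsUnitDet hFdet
  have hFM2det : IsUnit (Matrix.fromBlocks (FOWLAS + B₀) (B₀ * Q) (Qᵀ * B₀)
      (Qᵀ * B₀ * Q)).det := by
    rw [← hFM]; exact hFMode2pd.det_pos.ne'.isUnit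
  letI iFM : Invertible (Matrix.fromBlocks (FOWLAS + B₀) (B₀ * Q) (Qᵀ * B₀) (Qᵀ * B₀ * Q)) :=
    Matrix.invertibleOfIsUnitDet _ hFM2det
  rw [hFM, ← invOf_eq_nonsing_inv, Matrix.invOf_fromBlocks₂₂_eq,
    Matrix.toBlocks_fromBlocks₁₁, invOf_eq_nonsing_inv, hSchur]
end
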